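/- Let d and m be positive integers and f(x) = b_d x^d + ... + b_0 a polynomial with integer coefficients with b_d > 0. Let δ = gcd(b_0, ..., b_d, m). Then the number of residues n modulo m with f(n) ≡ 0 (mod m) is at most c · d · δ^{1/d} · m^{1 - 1/d}, where c > 0 is an absolute constant. Here one may assume the Konyagin bound: for polynomials whose coefficients together with m have gcd 1, the number of roots modulo m is at most c · d · m^{1-1/d}. -/

import Mathlib

open Finset Polynomial

lemma periodic_count_aux (m' : ℕ) (p : ℕ → Prop) [DecidablePred p]
    (hp : ∀ n, p (n + m') ↔ p n) (k : ℕ) :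
    ((Finset.Ioc 0 (k * m')).filter p).card = k * ((Finset.Ioc 0 m').filter p).card := by
  have hshift : ∀ k n, p (k * m' + n) ↔ p n := by
    intro k
    induction k with
    | zero => simp
    | succ k ih =>
      intro n
      rw [show (k + 1) * m' + n = (k * m' + n) + m' by ring, hp]
      exact ih n
  induction k with
  | zero => simp
  | succ k ih =>
    have hsplit : Finset.Ioc 0 ((k + 1) * m') =
        Finset.Ioc 0 (k * m') ∪ Finset.Ioc (k * m') ((k + 1) * m') :=
      (Finset.Ioc_union_Ioc_eq_Ioc (Nat.zero_le _)
        (Nat.mul_le_mul_right _ (Nat.le_succ k))).symm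
    have hdisj : Disjoint (Finset.Ioc 0 (k * m')) (Finset.Ioc (k * m') ((k + 1) * m')) := by
      apply Finset.disjoint_left.mpr
      intro a ha hb
      simp only [Finset.mem_Ioc] at ha hb
      omega
    rw [hsplit, Finset.filter_union,
      Finset.card_union_of_disjoint (Finset.disjoint_filter_filter hdisj), ih]
    have hmap : Finset.Ioc (k * m') ((k + 1) * m') =
        (Finset.Ioc 0 m').map (addLeftEmbedding (k * m')) := by
      rw [Finset.map_add_left_Ioc, add_zero, show k * m' + m' = (k + 1) * m' by ring]
    rw [hmap, Finset.filter_map, Finset.card_map]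
    have hcc : ((Finset.Ioc 0 m').filter (p ∘ addLeftEmbedding (k * m'))).card =
        ((Finset.Ioc 0 m').filter p).card := by
      apply Finset.card_bij (fun a _ => a) <;> intros <;>
        simp_all [addLeftEmbedding_apply, hshift]
    rw [hcc]; ring

theorem stmt_2
    (h : ∃ c : ℝ, 0 < c ∧ ∀ (d m : ℕ) (f : Polynomial ℤ), 1 ≤ d → 0 < m →
        f.natDegree = d → 0 < f.leadingCoeff → Int.gcd f.content (m : ℤ) = 1 →
        (((Finset.Icc 1 m).filter (fun n : ℕ => (m : ℤ) ∣ f.eval (n : ℤ))).card : ℝ)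
          ≤ c * d * (m : ℝ) ^ (1 - 1 / (d : ℝ))) :
    ∃ c : ℝ, 0 < c ∧ ∀ (d m : ℕ) (f : Polynomial ℤ), 1 ≤ d → 0 < m →
        f.natDegree = d → 0 < f.leadingCoeff →
        (((Finset.Icc 1 m).filter (fun n : ℕ => (m : ℤ) ∣ f.eval (n : ℤ))).card : ℝ)
          ≤ c * d * (Int.gcd f.content (m : ℤ) : ℝ) ^ ((1 : ℝ) / d)
              * (m : ℝ) ^ (1 - 1 / (d : ℝ)) := by
  obtain ⟨c, hc, hK⟩ := h
  refine ⟨c, hc, ?_⟩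
  intro d m f hd hm hdeg hlead
  set δ : ℕ := Int.gcd f.content (m : ℤ) with hδdef
  have hf0 : f ≠ 0 := fun h0 => by simp [h0] at hlead
  have hcont0 : f.content ≠ 0 := fun h0 => hf0 (Polynomial.content_eq_zero_iff.mp h0)
  have hδpos : 0 < δ := Int.gcd_pos_of_ne_zero_left _ hcont0
  have hδz : ((δ : ℤ)) ≠ 0 := by exact_mod_cast hδpos.ne'
  have hδm : δ ∣ m := by
    have h1 : ((δ : ℕ) : ℤ) ∣ (m : ℤ) := Int.gcd_dvd_right _ _
    exact_mod_cast h1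
  set m' : ℕ := m / δ with hm'def
  have hmm' : m = δ * m' := (Nat.mul_div_cancel' hδm).symm
  have hm'pos : 0 < m' := by
    rcases Nat.eq_zero_or_pos m' with h0 | h0
    · rw [h0, mul_zero] at hmm'; omega
    · exact h0
  -- divide f by δ
  have hCdvd : Polynomial.C ((δ : ℤ)) ∣ f := by
    rw [Polynomial.C_dvd_iff_dvd_coeff]
    intro i
    exact (Int.gcd_dvd_left _ _).trans (Polynomial.content_dvd_coeff i)
  obtain ⟨g, hg⟩ := hCdvd
  have hgdeg : g.natDegree = d := by
    rw [hg, Polynomial.natDegree_C_mul hδz] at hdeg; exact hdeg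
  have hglead : 0 < g.leadingCoeff := by
    rw [hg, Polynomial.leadingCoeff_mul, Polynomial.leadingCoeff_C] at hlead
    have h2 : (δ : ℤ) * 0 < (δ : ℤ) * g.leadingCoeff := by simpa using hlead
    exact lt_of_mul_lt_mul_left h2 (by positivity)
  have hgcont : f.content = (δ : ℤ) * g.content := by
    rw [hg, Polynomial.content_C_mul]
    congr 1
    exact Int.normalize_of_nonneg (by positivity)
  have hgcd1 : Int.gcd g.content (m' : ℤ) = 1 := by
    have hh : δ * Int.gcd g.content (m' : ℤ) = δ * 1 := by
      rw [mul_one]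
      conv_rhs => rw [hδdef]
      rw [hgcont, hmm']
      push_cast
      rw [Int.gcd_mul_left]
      simp
    exact Nat.eq_of_mul_eq_mul_left hδpos hh
  -- the two predicates agree
  have hiff : ∀ n : ℕ, ((m : ℤ) ∣ f.eval (n : ℤ)) ↔ ((m' : ℤ) ∣ g.eval (n : ℤ)) := by
    intro n
    rw [hg, Polynomial.eval_mul, Polynomial.eval_C, hmm']
    push_cast
    exact mul_dvd_mul_iff_left hδz
  -- periodicity
  have hper : ∀ n : ℕ, ((m' : ℤ) ∣ g.eval ((n + m' : ℕ) : ℤ)) ↔ ((m' : ℤ) ∣ g.eval (n : ℤ)) := by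
    intro n
    have hdv : (m' : ℤ) ∣ g.eval ((n + m' : ℕ) : ℤ) - g.eval (n : ℤ) := by
      have h3 := Polynomial.sub_dvd_eval_sub ((n + m' : ℕ) : ℤ) (n : ℤ) g
      have h4 : ((n + m' : ℕ) : ℤ) - (n : ℤ) = (m' : ℤ) := by push_cast; ring
      rwa [h4] at h3
    constructor
    · intro hx
      have := dvd_sub hx hdv
      simpa using this
    · intro hx
      have := dvd_add hx hdv
      simpa using this
  have e1 : (Finset.Icc 1 m) = Finset.Ioc 0 m := by
    ext x; simp [Nat.lt_iff_add_one_le]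
  have e2 : (Finset.Icc 1 m') = Finset.Ioc 0 m' := by
    ext x; simp [Nat.lt_iff_add_one_le]
  have e3 : ((Finset.Icc 1 m).filter (fun n : ℕ => (m : ℤ) ∣ f.eval (n : ℤ)))
      = ((Finset.Ioc 0 (δ * m')).filter (fun n : ℕ => (m' : ℤ) ∣ g.eval (n : ℤ))) := by
    rw [e1, ← hmm']
    exact Finset.filter_congr (fun n _ => by simpa using hiff n)
  have hcount : ((Finset.Icc 1 m).filter (fun n : ℕ => (m : ℤ) ∣ f.eval (n : ℤ))).card
      = δ * ((Finset.Icc 1 m').filter (fun n : ℕ => (m' : ℤ) ∣ g.eval (n : ℤ))).card := by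
    rw [e3, e2]
    exact periodic_count_aux m' (fun n : ℕ => (m' : ℤ) ∣ g.eval (n : ℤ)) hper δ
  rw [hcount]
  have hKey := hK d m' g hd hm'pos hgdeg hglead hgcd1
  have hδr : (0 : ℝ) < (δ : ℝ) := by positivity
  have hmr : (0 : ℝ) < (m : ℝ) := by positivity
  have hm'r : (0 : ℝ) < (m' : ℝ) := by positivity
  calc ((δ * ((Finset.Icc 1 m').filter (fun n : ℕ => (m' : ℤ) ∣ g.eval (n : ℤ))).card : ℕ) : ℝ)
      = (δ : ℝ) * (((Finset.Icc 1 m').filter (fun n : ℕ => (m' : ℤ) ∣ g.eval (n : ℤ))).card : ℝ) := by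
        push_cast; ring
    _ ≤ (δ : ℝ) * (c * d * (m' : ℝ) ^ (1 - 1 / (d : ℝ))) :=
        mul_le_mul_of_nonneg_left hKey (le_of_lt hδr)
    _ = c * d * (δ : ℝ) ^ ((1 : ℝ) / d) * (m : ℝ) ^ (1 - 1 / (d : ℝ)) := by
        have hmeq : (m' : ℝ) = (m : ℝ) / (δ : ℝ) := by
          rw [hmm']; push_cast; field_simp
        rw [hmeq, Real.div_rpow hmr.le hδr.le]
        set E := (δ : ℝ) ^ (1 - 1 / (d : ℝ)) with hE
        set D := (δ : ℝ) ^ ((1 : ℝ) / d) with hD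
        have hEne : E ≠ 0 := (Real.rpow_pos_of_pos hδr _).ne'
        have key2 : (δ : ℝ) = D * E := by
          rw [hD, hE, ← Real.rpow_add hδr,
            show (1 : ℝ) / d + (1 - 1 / (d : ℝ)) = 1 by ring, Real.rpow_one]
        rw [key2]
        field_simp
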